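/- Let T be a search tree on a tree G (an STT), and let v, v' be two distinct children of a node p in T. Then ∂(T_v) ∩ ∂(T_{v'}) = {p}. -/

import Mathlib

open SimpleGraph

variable {V : Type*}

/-- Reachability within a vertex set `S`. -/
def reachIn (G : SimpleGraph V) (S : Set V) : V → V → Prop :=
  Relation.ReflTransGen (fun x y => x ∈ S ∧ y ∈ S ∧ G.Adj x y)

/-- The connected component of `v` inside the vertex set `S`. -/
def compIn (G : SimpleGraph V) (S : Set V) (v : V) : Set V :=
  {u | reachIn G S v u}

/-- `IsSearchTree G par S r`: the parent map `par` describes a search tree with root `r`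
on the part of `G` induced by `S`, built recursively: the root `r` is chosen, and each
connected component of `S \ {r}` carries a search tree whose root is a child of `r`. -/
inductive IsSearchTree (G : SimpleGraph V) (par : V → Option V) : Set V → V → Prop where
  | node (S : Set V) (r : V) (ρ : V → V) (hr : r ∈ S)
      (hρ : ∀ v ∈ S, v ≠ r → par (ρ v) = some r)
      (h : ∀ v ∈ S, v ≠ r → IsSearchTree G par (compIn G (S \ {r}) v) (ρ v)) :
      IsSearchTree G par S r

/-- `isAnc par a v`: `a` is an ancestor of `v` (reflexively). -/
def isAnc (par : V → Option V) (a v : V) : Prop :=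
  Relation.ReflTransGen (fun x y => par x = some y) v a

/-- The subtree rooted at `v`: all descendants of `v` (including `v`). -/
def subtree (par : V → Option V) (v : V) : Set V := {u | isAnc par v u}

/-- The outer boundary `∂(T_v)` of the subtree rooted at `v`. -/
def bdry (G : SimpleGraph V) (par : V → Option V) (v : V) : Set V :=
  {x | x ∉ subtree par v ∧ ∃ u ∈ subtree par v, G.Adj x u}

/-- A search tree is 2-cut if every subtree boundary has size at most 2. -/
def TwoCut (G : SimpleGraph V) (par : V → Option V) : Prop :=
  ∀ v, (bdry G par v).ncard ≤ 2

open Classical in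
/-- The STT rotation of `v` with its parent `p`: `p` becomes a child of `v`, `v` takes the
former parent of `p`, and any child `c` of `v` with `p ∈ ∂(T_c)` is reattached to `p`. -/
noncomputable def rotate (G : SimpleGraph V) (par : V → Option V) (v p : V) :
    V → Option V := fun x =>
  if x = v then par p
  else if x = p then some v
  else if par x = some v ∧ p ∈ bdry G par x then some p
  else par x

/-- A splay step at `x`: a single rotation if `x` has no grandparent; a ZIG-ZAG
(two rotations at `x`) if `x` is a separator; a ZIG-ZIG (rotation at the parent,
then at `x`) otherwise. -/
noncomputable def splayStep (G : SimpleGraph V) (par : V → Option V) (x : V) :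
    V → Option V :=
  match par x with
  | none => par
  | some p =>
    match par p with
    | none => rotate G par x p
    | some g =>
      if (bdry G par x).ncard = 2 then
        rotate G (rotate G par x p) x g
      else
        rotate G (rotate G par p g) x p


section Aux

variable {G : SimpleGraph V} {par : V → Option V} {S A : Set V} {a b c r v x : V}

lemma reachIn_symm (h : reachIn G S a b) : reachIn G S b a := by
  induction h with
  | refl => exact .refl
  | tail _ hbc ih => exact Relation.ReflTransGen.head ⟨hbc.2.1, hbc.1, hbc.2.2.symm⟩ ih

lemma mem_compIn_self : a ∈ compIn G A a := Relation.ReflTransGen.refl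

lemma compIn_subset (ha : a ∈ A) : compIn G A a ⊆ A := by
  intro u hu
  rcases (Relation.ReflTransGen.cases_tail hu) with h | ⟨c, _, hc⟩
  · exact h ▸ ha
  · exact hc.2.1

lemma compIn_eq_of_mem (h : b ∈ compIn G A a) : compIn G A a = compIn G A b :=
  Set.ext fun c => ⟨fun hc => Relation.ReflTransGen.trans (reachIn_symm h) hc,
    fun hc => Relation.ReflTransGen.trans h hc⟩

lemma not_mem_compIn (hb : b ∉ compIn G A a) (hc : c ∈ compIn G A a) :
    c ∉ compIn G A b := fun hcb =>
  hb (Relation.ReflTransGen.trans hc (reachIn_symm hcb))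

lemma reachIn_compIn (h : reachIn G A v x) : reachIn G (compIn G A v) v x := by
  induction h with
  | refl => exact .refl
  | @tail c x hpre hstep ih =>
    exact ih.tail ⟨hpre, hpre.tail hstep, hstep.2.2⟩

/-- Connectivity of a vertex set. -/
def IsConnIn (G : SimpleGraph V) (S : Set V) : Prop :=
  ∀ a ∈ S, ∀ b ∈ S, reachIn G S a b

lemma isConnIn_compIn : IsConnIn G (compIn G A v) := fun a ha b hb =>
  Relation.ReflTransGen.trans (reachIn_symm (reachIn_compIn ha)) (reachIn_compIn hb)

lemma isConnIn_univ (h : G.Preconnected) : IsConnIn G (Set.univ : Set V) := by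
  have key : ∀ a b : V, G.Walk a b → reachIn G Set.univ a b := by
    intro a b w
    induction w with
    | nil => exact .refl
    | cons hadj _ ih => exact Relation.ReflTransGen.head ⟨trivial, trivial, hadj⟩ ih
  intro a _ b _
  obtain ⟨w⟩ := h a b
  exact key a b w

lemma mem_compIn_comm : a ∈ compIn G A b ↔ b ∈ compIn G A a :=
  ⟨reachIn_symm, reachIn_symm⟩

lemma IsSearchTree.root_mem (h : IsSearchTree G par S r) : r ∈ S := by
  cases h with | node S r ρ hr hρ h => exact hr

lemma par_descent (h : IsSearchTree G par S r) :
    ∀ x ∈ S, x ≠ r → ∃ z, z ∈ S ∧ z ≠ x ∧ par x = some z := by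
  induction h with
  | node S r ρ hr hρ h ih =>
    intro x hx hxr
    by_cases hx' : x = ρ x
    · exact ⟨r, hr, Ne.symm hxr, hx' ▸ hρ x hx hxr⟩
    · obtain ⟨z, hz, hzx, hp⟩ := ih x hx hxr x mem_compIn_self hx'
      have hxm : x ∈ S \ {r} := ⟨hx, hxr⟩
      exact ⟨z, (compIn_subset hxm hz).1, hzx, hp⟩

/-- Nothing outside `S` (or equal to `r`) has its parent in `S \ {r}`. -/
def ClosedPar (par : V → Option V) (S : Set V) (r : V) : Prop :=
  ∀ y z, par y = some z → z ∈ S → z ≠ r → y ∈ S ∧ y ≠ r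

/-- Every vertex whose parent is `r` lies in `S`. -/
def NFC (par : V → Option V) (S : Set V) (r : V) : Prop :=
  ∀ y, par y = some r → y ∈ S

lemma closed_nfc_step (S : Set V) (r : V) (ρ : V → V)
    (hρ : ∀ v ∈ S, v ≠ r → par (ρ v) = some r)
    (h : ∀ v ∈ S, v ≠ r → IsSearchTree G par (compIn G (S \ {r}) v) (ρ v))
    (hc : ClosedPar par S r) (v : V) (hv : v ∈ S) (hvr : v ≠ r) :
    ClosedPar par (compIn G (S \ {r}) v) (ρ v) ∧
      NFC par (compIn G (S \ {r}) v) (ρ v) := by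
  have hvm : v ∈ S \ {r} := ⟨hv, hvr⟩
  have key : ∀ y z, par y = some z → z ∈ S → z ≠ r →
      y ∉ compIn G (S \ {r}) v → z ∉ compIn G (S \ {r}) v := by
    intro y z hyz hzS hzr hyC
    obtain ⟨hyS, hyr⟩ := hc y z hyz hzS hzr
    by_cases hy' : y = ρ y
    · have h1 := hρ y hyS hyr
      rw [← hy', hyz] at h1
      exact (hzr (Option.some.inj h1)).elim
    · obtain ⟨z', hz', hz'y, hp⟩ :=
        par_descent (h y hyS hyr) y mem_compIn_self hy'
      have hzz : z = z' := by rw [hyz] at hp; exact Option.some.inj hp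
      subst hzz
      exact not_mem_compIn (fun hm => hyC (mem_compIn_comm.mp hm)) hz'
  constructor
  · intro y z hyz hzC hzv
    have hzS : z ∈ S := (compIn_subset hvm hzC).1
    have hzr : z ≠ r := (compIn_subset hvm hzC).2
    obtain ⟨hyS, hyr⟩ := hc y z hyz hzS hzr
    by_cases hyC : y ∈ compIn G (S \ {r}) v
    · refine ⟨hyC, fun he => ?_⟩
      have h1 := hρ v hv hvr
      rw [← he, hyz] at h1
      exact hzr (Option.some.inj h1)
    · exact absurd hzC (key y z hyz hzS hzr hyC)
  · intro y hy
    have hwC : ρ v ∈ compIn G (S \ {r}) v := (h v hv hvr).root_mem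
    have hwS : ρ v ∈ S := (compIn_subset hvm hwC).1
    have hwr : ρ v ≠ r := (compIn_subset hvm hwC).2
    by_contra hyC
    exact key y (ρ v) hy hwS hwr hyC hwC

/-- A genuine stage of the global search tree. -/
structure Stage (G : SimpleGraph V) (par : V → Option V) (S : Set V) (r : V) : Prop where
  tree : IsSearchTree G par S r
  closed : ClosedPar par S r
  nfc : NFC par S r
  conn : IsConnIn G S

lemma Stage.child (st : Stage G par S r) (hv : v ∈ S) (hvr : v ≠ r) :
    ∃ w, par w = some r ∧ w ∈ compIn G (S \ {r}) v ∧
      Stage G par (compIn G (S \ {r}) v) w := by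
  obtain ⟨ht, hc, hn, hco⟩ := st
  cases ht with
  | node S r ρ hr hρ h =>
    obtain ⟨hc1, hc2⟩ := closed_nfc_step S r ρ hρ h hc v hv hvr
    exact ⟨ρ v, hρ v hv hvr, (h v hv hvr).root_mem,
      ⟨h v hv hvr, hc1, hc2, isConnIn_compIn⟩⟩

lemma stage_at (st : Stage G par S r) : ∀ x ∈ S, ∃ S', x ∈ S' ∧ Stage G par S' x := by
  obtain ⟨ht, hc, hn, hco⟩ := st
  revert hc hn hco
  induction ht with
  | node S r ρ hr hρ h ih =>
    intro hc hn hco x hx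
    by_cases hxr : x = r
    · subst hxr
      exact ⟨S, hx, ⟨.node S x ρ hr hρ h, hc, hn, hco⟩⟩
    · obtain ⟨hc1, hc2⟩ := closed_nfc_step S r ρ hρ h hc x hx hxr
      exact ih x hx hxr hc1 hc2 isConnIn_compIn x mem_compIn_self

lemma mem_subtree (ht : IsSearchTree G par S r) : ∀ y ∈ S, y ∈ subtree par r := by
  induction ht with
  | node S r ρ hr hρ h ih =>
    intro y hy
    by_cases hyr : y = r
    · exact hyr ▸ Relation.ReflTransGen.refl
    · exact Relation.ReflTransGen.tail (ih y hy hyr y mem_compIn_self) (hρ y hy hyr)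

lemma Stage.subtree_eq (st : Stage G par S r) : subtree par r = S := by
  apply Set.Subset.antisymm
  · intro y hy
    induction hy using Relation.ReflTransGen.head_induction_on with
    | refl => exact st.tree.root_mem
    | @head a c step rest ih =>
      by_cases hcr : c = r
      · exact st.nfc _ (hcr ▸ step)
      · exact (st.closed _ _ step ih hcr).1
  · exact mem_subtree st.tree

lemma reachIn_walk (h : reachIn G S a b) :
    a ∈ S → ∃ W : G.Walk a b, ∀ y ∈ W.support, y ∈ S := by
  induction h using Relation.ReflTransGen.head_induction_on with
  | refl => exact fun hb => ⟨.nil, by simpa using hb⟩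
  | head step rest ih =>
    intro _
    obtain ⟨W, hW⟩ := ih step.2.1
    exact ⟨.cons step.2.2 W, by
      intro y hy
      rw [SimpleGraph.Walk.support_cons, List.mem_cons] at hy
      rcases hy with h | h
      · exact h ▸ step.1
      · exact hW y h⟩

lemma exists_adj_comp (h : reachIn G S a b) :
    a ≠ b → ∃ u ∈ compIn G (S \ {b}) a, G.Adj b u := by
  induction h using Relation.ReflTransGen.head_induction_on with
  | refl => exact fun hab => absurd rfl hab
  | @head a' c step rest ih =>
    intro hab
    by_cases hcb : c = b
    · exact ⟨a', mem_compIn_self, (hcb ▸ step.2.2).symm⟩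
    · obtain ⟨u, hu, hadj⟩ := ih hcb
      exact ⟨u, Relation.ReflTransGen.head ⟨⟨step.1, hab⟩, ⟨step.2.1, hcb⟩, step.2.2⟩ hu, hadj⟩

end Aux

/-- In a search tree on a tree `G` (an STT), if `v` and `v'` are distinct
children of `p`, then `∂(T_v) ∩ ∂(T_{v'}) = {p}`. -/
theorem bdry_inter_bdry_of_siblings (G : SimpleGraph V) (hG : G.IsTree)
    (par : V → Option V) (r : V) (hroot : par r = none)
    (hT : IsSearchTree G par Set.univ r)
    (p v v' : V) (hv : par v = some p) (hv' : par v' = some p) (hne : v ≠ v') :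
    bdry G par v ∩ bdry G par v' = {p} := by
  classical
  have st0 : Stage G par Set.univ r := by
    refine ⟨hT, ?_, fun y _ => trivial, isConnIn_univ hG.isConnected.preconnected⟩
    intro y z hyz _ hzr
    refine ⟨trivial, fun hyr => ?_⟩
    rw [hyr, hroot] at hyz
    exact Option.some_ne_none _ hyz.symm
  obtain ⟨Sp, hpSp, stp⟩ := stage_at st0 p trivial
  have hvS : v ∈ Sp := stp.nfc v hv
  have hv'S : v' ∈ Sp := stp.nfc v' hv'
  have hpar_ne : ∀ y : V, par y = some p → y ≠ p := by
    intro y hy he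
    subst he
    by_cases hyr : y = r
    · subst hyr; rw [hroot] at hy; exact Option.some_ne_none _ hy.symm
    · obtain ⟨z, _, hzy, hp⟩ := par_descent hT y trivial hyr
      rw [hy] at hp
      exact hzy (Option.some.inj hp).symm
  have hvp : v ≠ p := hpar_ne v hv
  have hv'p : v' ≠ p := hpar_ne v' hv'
  have hvm : v ∈ Sp \ {p} := ⟨hvS, hvp⟩
  have hv'm : v' ∈ Sp \ {p} := ⟨hv'S, hv'p⟩
  -- the stages of v and v'
  obtain ⟨w, hwpar, hwC, stC⟩ := stp.child hvS hvp
  have hwv : w = v := by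
    by_contra h
    obtain ⟨z, hz, hzv, hp2⟩ := par_descent stC.tree v mem_compIn_self (fun he => h he.symm)
    rw [hv] at hp2
    exact (compIn_subset hvm hz).2 (Set.mem_singleton_iff.mpr (Option.some.inj hp2).symm)
  rw [hwv] at hwC stC
  obtain ⟨w', hw'par, hw'C, stC'⟩ := stp.child hv'S hv'p
  have hwv' : w' = v' := by
    by_contra h
    obtain ⟨z, hz, hzv, hp2⟩ := par_descent stC'.tree v' mem_compIn_self (fun he => h he.symm)
    rw [hv'] at hp2
    exact (compIn_subset hv'm hz).2 (Set.mem_singleton_iff.mpr (Option.some.inj hp2).symm)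
  rw [hwv'] at hw'C stC'
  have hsub : subtree par v = compIn G (Sp \ {p}) v := stC.subtree_eq
  have hsub' : subtree par v' = compIn G (Sp \ {p}) v' := stC'.subtree_eq
  have hvC' : v ∉ compIn G (Sp \ {p}) v' := by
    intro hmem
    obtain ⟨z, hz, hzv, hp2⟩ := par_descent stC'.tree v hmem hne
    rw [hv] at hp2
    exact (compIn_subset hv'm hz).2 (Set.mem_singleton_iff.mpr (Option.some.inj hp2).symm)
  ext x
  simp only [Set.mem_inter_iff, Set.mem_singleton_iff]
  constructor
  · rintro ⟨⟨hxv, u, huv, hadj⟩, ⟨hxv', u', huv', hadj'⟩⟩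
    rw [hsub] at hxv huv
    rw [hsub'] at hxv' huv'
    by_contra hxp
    by_cases hxS : x ∈ Sp
    · apply hxv
      have hx : x ∈ Sp \ {p} := ⟨hxS, hxp⟩
      have hu : u ∈ Sp \ {p} := compIn_subset hvm huv
      have hxu : x ∈ compIn G (Sp \ {p}) u :=
        Relation.ReflTransGen.single ⟨hu, hx, hadj.symm⟩
      rw [compIn_eq_of_mem huv]
      exact hxu
    · have huS : u ∈ Sp := (compIn_subset hvm huv).1
      have hu'S : u' ∈ Sp := (compIn_subset hv'm huv').1
      have hu'C : u' ∉ compIn G (Sp \ {p}) v := not_mem_compIn hvC' huv'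
      have huu' : u ≠ u' := fun he => hu'C (he ▸ huv)
      have hxu : x ≠ u := fun he => hxS (he ▸ huS)
      have hxu' : x ≠ u' := fun he => hxS (he ▸ hu'S)
      obtain ⟨W, hW⟩ := reachIn_walk (stp.conn u huS u' hu'S) huS
      have hpath2 : (SimpleGraph.Walk.cons hadj.symm
          (SimpleGraph.Walk.cons hadj' SimpleGraph.Walk.nil)).IsPath := by
        rw [SimpleGraph.Walk.isPath_def]
        simp [hxu.symm, hxu', huu']
      have hpu := (SimpleGraph.isAcyclic_iff_path_unique.mp hG.IsAcyclic)
        (⟨_, hpath2⟩ : G.Path u u') W.toPath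
      have hx2 : x ∈ ((⟨_, hpath2⟩ : G.Path u u') : G.Walk u u').support := by
        simp [SimpleGraph.Walk.support_cons]
      rw [hpu] at hx2
      exact hxS (hW x (SimpleGraph.Walk.support_toPath_subset W hx2))
  · intro hxp
    rw [hxp]
    refine ⟨⟨?_, ?_⟩, ?_, ?_⟩
    · rw [hsub]; intro hmem; exact (compIn_subset hvm hmem).2 rfl
    · obtain ⟨u, hu, hadj⟩ := exists_adj_comp (stp.conn v hvS p hpSp) hvp
      exact ⟨u, by rw [hsub]; exact hu, hadj⟩
    · rw [hsub']; intro hmem; exact (compIn_subset hv'm hmem).2 rfl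
    · obtain ⟨u, hu, hadj⟩ := exists_adj_comp (stp.conn v' hv'S p hpSp) hv'p
      exact ⟨u, by rw [hsub']; exact hu, hadj⟩
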